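/- arXiv:1501.03208 — 4 statements merged into one kernel-verified Lean document; each statement's English description precedes it below -/
import Mathlib

section
/- For the harmonic frame D ∈ ℂ^{n×N} with N = n+L, whose entries are d_{jk} = (n+L)^{-1/2} exp(2πi jk/(n+L)) for j ∈ [n], k ∈ [N], the Gram matrix satisfies (D*D)_{kk} = n/(n+L) for all k, and |(D*D)_{jk}| ≤ L/(n+L) for all j ≠ k. -/
open Finset Matrix

/-- The harmonic frame: the `n × (n+L)` matrix obtained by deleting the last `L`
rows of the `(n+L) × (n+L)` DFT matrix. -/
noncomputable def harmonicFrame (n L : ℕ) : Matrix (Fin n) (Fin (n + L)) ℂ :=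
  fun j k => (1 / (Real.sqrt (n + L) : ℝ)) *
    Complex.exp (2 * Real.pi * Complex.I * ((j : ℕ) : ℂ) * ((k : ℕ) : ℂ) / ((n + L : ℕ) : ℂ))

lemma harmonicFrame_gram_apply (n L : ℕ) (hn : 0 < n) (j k : Fin (n + L)) :
    ((harmonicFrame n L).conjTranspose * harmonicFrame n L) j k
      = (1 / ((n + L : ℕ) : ℂ)) * ∑ m ∈ Finset.range n,
          Complex.exp (2 * Real.pi * Complex.I * (((k : ℤ) - (j : ℤ)) : ℂ) / ((n + L : ℕ) : ℂ)) ^ m := by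
  have hN0 : 0 < n + L := Nat.lt_of_lt_of_le hn (Nat.le_add_right n L)
  have hNR : (0:ℝ) < ((n + L : ℕ) : ℝ) := by exact_mod_cast hN0
  have hNC : ((n + L : ℕ) : ℂ) ≠ 0 := by exact_mod_cast hN0.ne'
  rw [Matrix.mul_apply, Finset.mul_sum]
  rw [← Fin.sum_univ_eq_sum_range (fun m : ℕ =>
    (1 / ((n + L : ℕ) : ℂ)) * Complex.exp (2 * Real.pi * Complex.I * (((k : ℤ) - (j : ℤ)) : ℂ) / ((n + L : ℕ) : ℂ)) ^ m)]
  apply Finset.sum_congr rfl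
  intro m hm
  simp only [Matrix.conjTranspose_apply, harmonicFrame, star_mul', RCLike.star_def,
    map_div₀, _root_.map_one, Complex.conj_ofReal, ← Complex.exp_conj]
  have hA : ((1 : ℂ) / (Real.sqrt ((n:ℝ)+(L:ℝ)) : ℂ)) * ((1:ℂ) / (Real.sqrt ((n:ℝ)+(L:ℝ)) : ℂ))
      = 1 / ((n+L:ℕ):ℂ) := by
    rw [div_mul_div_comm, one_mul, ← Complex.ofReal_mul, Real.mul_self_sqrt (by positivity)]
    push_cast; ring
  rw [← Complex.exp_nat_mul, mul_mul_mul_comm, hA, ← Complex.exp_add]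
  congr 1
  simp only [map_div₀, _root_.map_mul, Complex.conj_I, Complex.conj_ofReal, _root_.map_ofNat,
    Complex.conj_natCast]
  push_cast
  field_simp
  ring


/-- The Gram matrix of the harmonic frame has diagonal entries `n/(n+L)` and
off-diagonal entries of modulus at most `L/(n+L)`. -/
theorem harmonicFrame_gram_entries (n L : ℕ) (hn : 0 < n) :
    (∀ k, ((harmonicFrame n L).conjTranspose * harmonicFrame n L) k k
        = ((n : ℂ) / ((n : ℂ) + (L : ℂ)))) ∧
    (∀ j k : Fin (n + L), j ≠ k →
      ‖((harmonicFrame n L).conjTranspose * harmonicFrame n L) j k‖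
        ≤ (L : ℝ) / ((n : ℝ) + (L : ℝ))) := by
  have hN0 : 0 < n + L := Nat.lt_of_lt_of_le hn (Nat.le_add_right n L)
  have hNR : (0:ℝ) < ((n + L : ℕ) : ℝ) := by exact_mod_cast hN0
  have hNC : ((n + L : ℕ) : ℂ) ≠ 0 := by exact_mod_cast hN0.ne'
  constructor
  · intro k
    rw [harmonicFrame_gram_apply n L hn k k]
    simp only [sub_self, Int.cast_zero, mul_zero, zero_div, Complex.exp_zero, one_pow,
      Finset.sum_const, Finset.card_range, nsmul_eq_mul, mul_one]
    push_cast
    ring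
  · intro j k hjk
    rw [harmonicFrame_gram_apply n L hn j k]
    set c : ℤ := (k : ℤ) - (j : ℤ) with hc
    set ω : ℂ := Complex.exp (2 * Real.pi * Complex.I * (((k : ℤ) - (j : ℤ)) : ℂ) / ((n + L : ℕ) : ℂ)) with hω0
    have hω : ω = Complex.exp (2 * Real.pi * Complex.I * (c : ℂ) / ((n + L : ℕ) : ℂ)) := by
      rw [hω0]; congr 1; rw [hc]; push_cast; ring
    have hNC' : ((n:ℂ)+(L:ℂ)) ≠ 0 := by exact_mod_cast hNC
    have hc0 : c ≠ 0 := by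
      simp only [hc, sub_ne_zero]
      intro h
      have h2 : (k:ℕ) = (j:ℕ) := by exact_mod_cast h
      exact hjk (Fin.ext h2).symm
    have hclt : c < (n + L : ℕ) := by
      have := k.isLt; omega
    have hcgt : -((n + L : ℕ) : ℤ) < c := by
      have := j.isLt; omega
    have hω1 : ω ≠ 1 := by
      intro h
      rw [hω, Complex.exp_eq_one_iff] at h
      obtain ⟨t, ht⟩ := h
      have hπ : (Real.pi : ℂ) ≠ 0 := by exact_mod_cast Real.pi_ne_zero
      have h2 : (2 : ℂ) * Real.pi * Complex.I ≠ 0 := by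
        simp [hπ, Complex.I_ne_zero]
      push_cast at ht
      rw [mul_div_assoc] at ht
      have ht3 := mul_left_cancel₀ h2 (ht.trans (by ring))
      rw [div_eq_iff hNC'] at ht3
      have hz : c = t * ((n + L : ℕ) : ℤ) := by exact_mod_cast ht3
      rcases lt_trichotomy t 0 with h1 | h1 | h1
      · have h2' : t ≤ -1 := by omega
        have hNZ : (0:ℤ) < ((n + L : ℕ) : ℤ) := by exact_mod_cast hN0
        nlinarith
      · rw [h1, zero_mul] at hz; exact hc0 hz
      · have h2' : 1 ≤ t := h1
        have hNZ : (0:ℤ) < ((n + L : ℕ) : ℤ) := by exact_mod_cast hN0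
        nlinarith
    have hωN : ω ^ (n + L) = 1 := by
      rw [hω, ← Complex.exp_nat_mul]
      have heq : ((n + L : ℕ) : ℂ) * (2 * Real.pi * Complex.I * (c : ℂ) / ((n + L : ℕ) : ℂ))
          = (c : ℂ) * (2 * Real.pi * Complex.I) := by
        push_cast
        field_simp
      rw [heq]
      exact_mod_cast Complex.exp_int_mul_two_pi_mul_I c
    have habs : ∀ m : ℕ, ‖ω ^ m‖ = 1 := by
      intro m
      rw [norm_pow]
      have hωe : ω = Complex.exp (((2 * Real.pi * c / (n + L : ℕ) : ℝ) : ℂ) * Complex.I) := by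
        rw [hω]; congr 1; push_cast; field_simp
      rw [hωe, Complex.norm_exp_ofReal_mul_I, one_pow]
    have hfull : ∑ m ∈ Finset.range (n + L), ω ^ m = 0 := by
      rw [geom_sum_eq hω1, hωN, sub_self, zero_div]
    have hsplit : ∑ m ∈ Finset.range n, ω ^ m
        = -∑ i ∈ Finset.range L, ω ^ (n + i) := by
      have h := Finset.sum_range_add (fun m => ω ^ m) n L
      rw [hfull] at h
      exact eq_neg_of_add_eq_zero_left h.symm
    have hbd : ‖∑ i ∈ Finset.range L, ω ^ (n + i)‖ ≤ (L : ℝ) := by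
      calc ‖∑ i ∈ Finset.range L, ω ^ (n + i)‖
          ≤ ∑ i ∈ Finset.range L, ‖ω ^ (n + i)‖ := norm_sum_le _ _
        _ = (L : ℝ) := by simp [habs]
    calc ‖(1 / ((n + L : ℕ) : ℂ)) * ∑ m ∈ Finset.range n, ω ^ m‖
        = (1 / ((n + L : ℕ) : ℝ)) * ‖∑ i ∈ Finset.range L, ω ^ (n + i)‖ := by
          rw [hsplit, norm_mul, norm_neg, norm_div, norm_one, Complex.norm_natCast]
      _ ≤ (1 / ((n + L : ℕ) : ℝ)) * (L : ℝ) := by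
          apply mul_le_mul_of_nonneg_left hbd (by positivity)
      _ = (L : ℝ) / ((n : ℝ) + (L : ℝ)) := by push_cast; ring
end

section
/- Let D be the harmonic frame with N = n+L and suppose 2Ls ≤ N/2 (i.e., Ls ≤ N/4). Then for every s-sparse z ∈ ℂ^N, ‖Dz‖₂² ≥ (1 − 2Ls/N) ‖z‖₂² ≥ (1/2)‖z‖₂². -/
open Finset Matrix

noncomputable def l2norm {ι : Type*} [Fintype ι] (v : ι → ℂ) : ℝ :=
  Real.sqrt (∑ i, ‖v i‖ ^ 2)

open Classical in
noncomputable def sparsity {ι : Type*} [Fintype ι] (v : ι → ℂ) : ℕ :=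
  (Finset.univ.filter fun i => v i ≠ 0).card

private lemma sum_exp_full (N : ℕ) (hN : 0 < N) (m : ℤ) (hm : ¬ ((N : ℤ) ∣ m)) :
    ∑ j ∈ Finset.range N, Complex.exp (2 * Real.pi * Complex.I * m * j / N) = 0 := by
  have hNC : ((N : ℂ)) ≠ 0 := Nat.cast_ne_zero.mpr hN.ne'
  have hterm : ∀ j ∈ Finset.range N,
      Complex.exp (2 * Real.pi * Complex.I * m * j / N)
        = Complex.exp (2 * Real.pi * Complex.I * m / N) ^ j := by
    intro j _
    rw [← Complex.exp_nat_mul]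
    congr 1
    ring
  rw [Finset.sum_congr rfl hterm]
  have hω : Complex.exp (2 * Real.pi * Complex.I * m / N) ≠ 1 := by
    intro h
    rw [Complex.exp_eq_one_iff] at h
    obtain ⟨k, hk⟩ := h
    apply hm
    refine ⟨k, ?_⟩
    rw [mul_comm]
    have : (m : ℂ) = k * N := by
      field_simp at hk
      have h2 : (2 * Real.pi * Complex.I) * (m : ℂ)
          = (2 * Real.pi * Complex.I) * ((k : ℂ) * N) := by
        rw [hk]; ring
      exact mul_left_cancel₀ Complex.two_pi_I_ne_zero h2
    exact_mod_cast this
  rw [geom_sum_eq hω]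
  have hpow : Complex.exp (2 * Real.pi * Complex.I * m / N) ^ N = 1 := by
    rw [← Complex.exp_nat_mul]
    have : (N : ℂ) * (2 * Real.pi * Complex.I * m / N) = m * (2 * Real.pi * Complex.I) := by
      field_simp
    rw [this, Complex.exp_int_mul_two_pi_mul_I]
  rw [hpow, sub_self, zero_div]

private lemma sum_exp_partial_bound (n L : ℕ) (hn : 0 < n) (m : ℤ)
    (hm : ¬ (((n + L : ℕ) : ℤ) ∣ m)) :
    ‖∑ j ∈ Finset.range n, Complex.exp (2 * Real.pi * Complex.I * m * j / ((n + L : ℕ) : ℂ))‖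
      ≤ L := by
  have hN : 0 < n + L := by omega
  have hsplit := Finset.sum_range_add
    (fun j => Complex.exp (2 * Real.pi * Complex.I * m * j / ((n + L : ℕ) : ℂ))) n L
  have hfull := sum_exp_full (n + L) hN m hm
  rw [hfull] at hsplit
  have heq : ∑ j ∈ Finset.range n,
        Complex.exp (2 * Real.pi * Complex.I * m * j / ((n + L : ℕ) : ℂ))
      = - ∑ i ∈ Finset.range L,
          Complex.exp (2 * Real.pi * Complex.I * m * (n + i) / ((n + L : ℕ) : ℂ)) := by
    have := hsplit.symm
    push_cast at this ⊢
    linear_combination this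
  rw [heq, norm_neg]
  calc ‖∑ i ∈ Finset.range L,
          Complex.exp (2 * Real.pi * Complex.I * m * (n + i) / ((n + L : ℕ) : ℂ))‖
      ≤ ∑ i ∈ Finset.range L,
          ‖Complex.exp (2 * Real.pi * Complex.I * m * (n + i) / ((n + L : ℕ) : ℂ))‖ :=
        norm_sum_le _ _
    _ ≤ ∑ _i ∈ Finset.range L, (1 : ℝ) := by
        apply Finset.sum_le_sum
        intro i _
        have : (2 * Real.pi * Complex.I * m * ((n : ℂ) + i) / ((n + L : ℕ) : ℂ))
            = ((2 * Real.pi * m * (n + i) / ((n + L : ℕ) : ℝ) : ℝ) : ℂ) * Complex.I := by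
          push_cast
          ring
        rw [this]
        rw [Complex.norm_exp_ofReal_mul_I]
    _ = L := by simp

private lemma entry_mul (n L : ℕ) (j : Fin n) (k k' : Fin (n + L)) :
    harmonicFrame n L j k * (starRingEnd ℂ) (harmonicFrame n L j k')
      = (1 / ((n + L : ℕ) : ℂ)) *
        Complex.exp (2 * Real.pi * Complex.I * (((k : ℕ) : ℂ) - ((k' : ℕ) : ℂ)) * ((j : ℕ) : ℂ)
          / ((n + L : ℕ) : ℂ)) := by
  unfold harmonicFrame
  have hc2 : (starRingEnd ℂ) (2 * (Real.pi : ℂ) * Complex.I * ((j : ℕ) : ℂ) * ((k' : ℕ) : ℂ)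
        / ((n + L : ℕ) : ℂ))
      = -(2 * (Real.pi : ℂ) * Complex.I * ((j : ℕ) : ℂ) * ((k' : ℕ) : ℂ) / ((n + L : ℕ) : ℂ)) := by
    rw [show 2 * (Real.pi : ℂ) * Complex.I * ((j : ℕ) : ℂ) * ((k' : ℕ) : ℂ) / ((n + L : ℕ) : ℂ)
        = ((2 * Real.pi * ((j : ℕ) : ℝ) * ((k' : ℕ) : ℝ) / ((n + L : ℕ) : ℝ) : ℝ) : ℂ)
            * Complex.I from by push_cast; ring]
    rw [RingHom.map_mul, Complex.conj_ofReal, Complex.conj_I]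
    ring
  rw [RingHom.map_mul, map_div₀, RingHom.map_one, Complex.conj_ofReal, ← Complex.exp_conj, hc2]
  have hss : ((Real.sqrt ((n : ℝ) + (L : ℝ)) : ℝ) : ℂ) * ((Real.sqrt ((n : ℝ) + (L : ℝ)) : ℝ) : ℂ)
      = ((n + L : ℕ) : ℂ) := by
    rw [← Complex.ofReal_mul, Real.mul_self_sqrt (by positivity)]
    push_cast; ring
  rw [show (1 / ((Real.sqrt ((n : ℝ) + (L : ℝ)) : ℝ) : ℂ))
        * Complex.exp (2 * Real.pi * Complex.I * ((j : ℕ) : ℂ) * ((k : ℕ) : ℂ) / ((n + L : ℕ) : ℂ))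
        * ((1 / ((Real.sqrt ((n : ℝ) + (L : ℝ)) : ℝ) : ℂ))
          * Complex.exp (-(2 * (Real.pi : ℂ) * Complex.I * ((j : ℕ) : ℂ) * ((k' : ℕ) : ℂ)
              / ((n + L : ℕ) : ℂ))))
      = (Complex.exp (2 * Real.pi * Complex.I * ((j : ℕ) : ℂ) * ((k : ℕ) : ℂ) / ((n + L : ℕ) : ℂ))
          * Complex.exp (-(2 * (Real.pi : ℂ) * Complex.I * ((j : ℕ) : ℂ) * ((k' : ℕ) : ℂ)
              / ((n + L : ℕ) : ℂ))))
        / (((Real.sqrt ((n : ℝ) + (L : ℝ)) : ℝ) : ℂ) * ((Real.sqrt ((n : ℝ) + (L : ℝ)) : ℝ) : ℂ))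
      from by ring]
  rw [hss, ← Complex.exp_add,
    show 2 * (Real.pi : ℂ) * Complex.I * ((j : ℕ) : ℂ) * ((k : ℕ) : ℂ) / ((n + L : ℕ) : ℂ)
        + -(2 * (Real.pi : ℂ) * Complex.I * ((j : ℕ) : ℂ) * ((k' : ℕ) : ℂ) / ((n + L : ℕ) : ℂ))
      = 2 * Real.pi * Complex.I * (((k : ℕ) : ℂ) - ((k' : ℕ) : ℂ)) * ((j : ℕ) : ℂ)
          / ((n + L : ℕ) : ℂ) from by ring]
  ring

private noncomputable def Egram (n L : ℕ) (k k' : Fin (n + L)) : ℂ :=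
  ∑ j : Fin n, Complex.exp (2 * Real.pi * Complex.I * (((k : ℕ) : ℂ) - ((k' : ℕ) : ℂ))
    * ((j : ℕ) : ℂ) / ((n + L : ℕ) : ℂ))

private lemma Egram_diag (n L : ℕ) (k : Fin (n + L)) : Egram n L k k = (n : ℂ) := by
  unfold Egram
  simp

private lemma Egram_off (n L : ℕ) (hn : 0 < n) (k k' : Fin (n + L)) (hkk : k ≠ k') :
    ‖Egram n L k k'‖ ≤ L := by
  unfold Egram
  set m : ℤ := ((k : ℕ) : ℤ) - ((k' : ℕ) : ℤ) with hm
  have hm0 : m ≠ 0 := by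
    intro h
    apply hkk
    apply Fin.ext
    omega
  have hdvd : ¬ (((n + L : ℕ) : ℤ) ∣ m) := by
    intro hdvd
    have h1 := Int.le_of_dvd (abs_pos.mpr hm0) ((dvd_abs _ _).mpr hdvd)
    have hk1 := k.isLt
    have hk2 := k'.isLt
    have h2 : |m| < ((n + L : ℕ) : ℤ) := by
      rw [abs_lt]
      constructor <;> omega
    omega
  have hrw : ∑ j : Fin n, Complex.exp (2 * Real.pi * Complex.I
        * (((k : ℕ) : ℂ) - ((k' : ℕ) : ℂ)) * ((j : ℕ) : ℂ) / ((n + L : ℕ) : ℂ))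
      = ∑ j ∈ Finset.range n,
          Complex.exp (2 * Real.pi * Complex.I * (m : ℂ) * (j : ℂ) / ((n + L : ℕ) : ℂ)) := by
    rw [Fin.sum_univ_eq_sum_range (fun j =>
      Complex.exp (2 * Real.pi * Complex.I * (((k : ℕ) : ℂ) - ((k' : ℕ) : ℂ)) * ((j : ℕ) : ℂ)
        / ((n + L : ℕ) : ℂ)))]
    refine Finset.sum_congr rfl fun j _ => ?_
    congr 1
    rw [hm]
    push_cast
    ring
  rw [hrw]
  exact sum_exp_partial_bound n L hn m hdvd

private lemma gram_expansion (n L : ℕ) (hn : 0 < n) (z : Fin (n + L) → ℂ) :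
    ∑ j : Fin n, ((harmonicFrame n L).mulVec z j) * (starRingEnd ℂ) ((harmonicFrame n L).mulVec z j)
      = ∑ k : Fin (n + L), ∑ k' : Fin (n + L),
          z k * (starRingEnd ℂ) (z k') * ((1 / ((n + L : ℕ) : ℂ)) * Egram n L k k') := by
  have hw : ∀ j, (harmonicFrame n L).mulVec z j = ∑ k, harmonicFrame n L j k * z k := by
    intro j
    simp [Matrix.mulVec, dotProduct]
  calc ∑ j : Fin n, ((harmonicFrame n L).mulVec z j)
          * (starRingEnd ℂ) ((harmonicFrame n L).mulVec z j)
      = ∑ j : Fin n, ∑ k : Fin (n + L), ∑ k' : Fin (n + L),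
          z k * (starRingEnd ℂ) (z k')
            * (harmonicFrame n L j k * (starRingEnd ℂ) (harmonicFrame n L j k')) := by
        refine Finset.sum_congr rfl fun j _ => ?_
        rw [hw j, map_sum, Finset.sum_mul_sum]
        refine Finset.sum_congr rfl fun k _ => Finset.sum_congr rfl fun k' _ => ?_
        rw [RingHom.map_mul]
        ring
    _ = ∑ k : Fin (n + L), ∑ k' : Fin (n + L), ∑ j : Fin n,
          z k * (starRingEnd ℂ) (z k')
            * (harmonicFrame n L j k * (starRingEnd ℂ) (harmonicFrame n L j k')) := by
        rw [Finset.sum_comm]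
        exact Finset.sum_congr rfl fun k _ => Finset.sum_comm
    _ = ∑ k : Fin (n + L), ∑ k' : Fin (n + L),
          z k * (starRingEnd ℂ) (z k') * ((1 / ((n + L : ℕ) : ℂ)) * Egram n L k k') := by
        refine Finset.sum_congr rfl fun k _ => Finset.sum_congr rfl fun k' _ => ?_
        rw [← Finset.mul_sum]
        congr 1
        unfold Egram
        rw [Finset.mul_sum]
        exact Finset.sum_congr rfl fun j _ => entry_mul n L j k k'

/-- For the harmonic frame with `N = n+L` and `Ls ≤ N/4`, every `s`-sparse `z`
satisfies `‖Dz‖₂² ≥ (1 − 2Ls/N)‖z‖₂² ≥ ‖z‖₂²/2`. -/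
theorem harmonicFrame_lower_bound (n L s : ℕ) (hn : 0 < n)
    (hLs : ((L : ℝ) * s) ≤ ((n + L : ℕ) : ℝ) / 4)
    (z : Fin (n + L) → ℂ) (hz : sparsity z ≤ s) :
    (1 - 2 * (L : ℝ) * s / ((n + L : ℕ) : ℝ)) * (l2norm z) ^ 2
        ≤ (l2norm ((harmonicFrame n L).mulVec z)) ^ 2 ∧
    (1 / 2 : ℝ) * (l2norm z) ^ 2
        ≤ (1 - 2 * (L : ℝ) * s / ((n + L : ℕ) : ℝ)) * (l2norm z) ^ 2 := by
  classical
  have hNpos : (0 : ℝ) < ((n + L : ℕ) : ℝ) := by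
    have : 0 < n + L := by omega
    exact_mod_cast this
  set S1 : ℝ := ∑ k, ‖z k‖ with hS1def
  set S2 : ℝ := ∑ k, ‖z k‖ ^ 2 with hS2def
  have hS2nonneg : 0 ≤ S2 := Finset.sum_nonneg fun k _ => by positivity
  have hl2z : (l2norm z) ^ 2 = S2 := Real.sq_sqrt (Finset.sum_nonneg fun k _ => by positivity)
  have hl2Dz : (l2norm ((harmonicFrame n L).mulVec z)) ^ 2
      = ∑ j : Fin n, ‖(harmonicFrame n L).mulVec z j‖ ^ 2 :=
    Real.sq_sqrt (Finset.sum_nonneg fun j _ => by positivity)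
  -- norm-squared sum as real part of the quadratic form
  have hsq : ∀ w : ℂ, ‖w‖ ^ 2 = (w * (starRingEnd ℂ) w).re := by
    intro w
    rw [Complex.mul_conj, Complex.normSq_eq_norm_sq, Complex.ofReal_re]
  have hnormid : ∑ j : Fin n, ‖(harmonicFrame n L).mulVec z j‖ ^ 2
      = (∑ k : Fin (n + L), ∑ k' : Fin (n + L),
          z k * (starRingEnd ℂ) (z k') * ((1 / ((n + L : ℕ) : ℂ)) * Egram n L k k')).re := by
    rw [← gram_expansion n L hn z, Complex.re_sum]
    exact Finset.sum_congr rfl fun j _ => hsq _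
  -- split diagonal and off-diagonal
  set f : Fin (n + L) → Fin (n + L) → ℂ := fun k k' =>
    z k * (starRingEnd ℂ) (z k') * ((1 / ((n + L : ℕ) : ℂ)) * Egram n L k k') with hfdef
  have hsplit : ∑ k, ∑ k', f k k'
      = (∑ k, f k k) + ∑ k, ∑ k' ∈ Finset.univ.erase k, f k k' := by
    rw [← Finset.sum_add_distrib]
    exact Finset.sum_congr rfl fun k _ =>
      (Finset.add_sum_erase Finset.univ (f k) (Finset.mem_univ k)).symm
  -- diagonal real part
  have hdiag : (∑ k, f k k).re = S2 * ((n : ℝ) / ((n + L : ℕ) : ℝ)) := by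
    rw [Complex.re_sum, hS2def, Finset.sum_mul]
    refine Finset.sum_congr rfl fun k _ => ?_
    rw [hfdef]
    simp only
    rw [Egram_diag, Complex.mul_conj]
    rw [show ((Complex.normSq (z k) : ℂ)) * ((1 / ((n + L : ℕ) : ℂ)) * (n : ℂ))
        = ((Complex.normSq (z k) * ((n : ℝ) / ((n + L : ℕ) : ℝ)) : ℝ) : ℂ) from by
      push_cast; ring]
    rw [Complex.ofReal_re]
    simp [Complex.normSq_eq_norm_sq]
  -- off-diagonal bound
  have hoffterm : ∀ (k k' : Fin (n + L)), k' ≠ k →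
      ‖f k k'‖ ≤ ‖z k‖ * ‖z k'‖ * ((L : ℝ) / ((n + L : ℕ) : ℝ)) := by
    intro k k' hne
    rw [hfdef]
    simp only
    rw [norm_mul, norm_mul, norm_mul]
    have h1 : ‖(starRingEnd ℂ) (z k')‖ = ‖z k'‖ := by
      simp
    have h2 : ‖(1 / ((n + L : ℕ) : ℂ))‖ = 1 / ((n + L : ℕ) : ℝ) := by
      rw [norm_div, norm_one, Complex.norm_natCast]
    rw [h1, h2]
    have h3 : ‖Egram n L k k'‖ ≤ (L : ℝ) := Egram_off n L hn k k' (fun h => hne h.symm)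
    have h4 : (0 : ℝ) ≤ ‖z k‖ * ‖z k'‖ := by positivity
    calc ‖z k‖ * ‖z k'‖ * (1 / ((n + L : ℕ) : ℝ) * ‖Egram n L k k'‖)
        ≤ ‖z k‖ * ‖z k'‖ * (1 / ((n + L : ℕ) : ℝ) * (L : ℝ)) := by
          apply mul_le_mul_of_nonneg_left _ h4
          apply mul_le_mul_of_nonneg_left h3 (by positivity)
      _ = ‖z k‖ * ‖z k'‖ * ((L : ℝ) / ((n + L : ℕ) : ℝ)) := by ring
  have herasesum : ∀ k : Fin (n + L), ∑ k' ∈ Finset.univ.erase k, ‖z k'‖ = S1 - ‖z k‖ := by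
    intro k
    have := Finset.add_sum_erase Finset.univ (fun k' => ‖z k'‖) (Finset.mem_univ k)
    rw [hS1def]
    linarith
  have hoff : ‖∑ k, ∑ k' ∈ Finset.univ.erase k, f k k'‖
      ≤ ((L : ℝ) / ((n + L : ℕ) : ℝ)) * (S1 * S1 - S2) := by
    calc ‖∑ k, ∑ k' ∈ Finset.univ.erase k, f k k'‖
        ≤ ∑ k, ‖∑ k' ∈ Finset.univ.erase k, f k k'‖ := norm_sum_le _ _
      _ ≤ ∑ k, ∑ k' ∈ Finset.univ.erase k, ‖f k k'‖ :=
          Finset.sum_le_sum fun k _ => norm_sum_le _ _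
      _ ≤ ∑ k, ∑ k' ∈ Finset.univ.erase k,
            ‖z k‖ * ‖z k'‖ * ((L : ℝ) / ((n + L : ℕ) : ℝ)) :=
          Finset.sum_le_sum fun k _ => Finset.sum_le_sum fun k' hk' =>
            hoffterm k k' (Finset.ne_of_mem_erase hk')
      _ = ∑ k, ‖z k‖ * ((L : ℝ) / ((n + L : ℕ) : ℝ)) * (S1 - ‖z k‖) := by
          refine Finset.sum_congr rfl fun k _ => ?_
          rw [← herasesum k, Finset.mul_sum]
          exact Finset.sum_congr rfl fun k' _ => by ring
      _ = ((L : ℝ) / ((n + L : ℕ) : ℝ)) * (S1 * S1 - S2) := by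
          have expand : ∀ k : Fin (n + L),
              ‖z k‖ * ((L : ℝ) / ((n + L : ℕ) : ℝ)) * (S1 - ‖z k‖)
                = ((L : ℝ) / ((n + L : ℕ) : ℝ)) * (S1 * ‖z k‖)
                  - ((L : ℝ) / ((n + L : ℕ) : ℝ)) * ‖z k‖ ^ 2 := fun k => by ring
          rw [Finset.sum_congr rfl fun k _ => expand k, Finset.sum_sub_distrib,
            ← Finset.mul_sum, ← Finset.mul_sum, ← Finset.mul_sum, ← hS1def, ← hS2def]
          ring
  -- Cauchy–Schwarz / sparsity bound
  have hS1sq : S1 * S1 ≤ (s : ℝ) * S2 := by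
    classical
    set T : Finset (Fin (n + L)) := Finset.univ.filter (fun i => z i ≠ 0) with hT
    have hS1T : S1 = ∑ k ∈ T, ‖z k‖ := by
      rw [hS1def]
      refine (Finset.sum_subset (Finset.subset_univ T) fun x _ hx => ?_).symm
      have : z x = 0 := by
        by_contra hzx
        exact hx (by simp [hT, hzx])
      simp [this]
    have hcard : (T.card : ℝ) ≤ (s : ℝ) := by
      have : T.card = sparsity z := by
        rw [sparsity, hT]
      exact_mod_cast this ▸ (Nat.cast_le.mpr hz)
    have hcs := sq_sum_le_card_mul_sum_sq (s := T) (f := fun k => ‖z k‖)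
    have hsub : ∑ k ∈ T, ‖z k‖ ^ 2 ≤ S2 := by
      rw [hS2def]
      exact Finset.sum_le_sum_of_subset_of_nonneg (Finset.subset_univ T)
        (fun k _ _ => by positivity)
    have hTsq : (∑ k ∈ T, ‖z k‖ ^ 2) ≥ 0 := Finset.sum_nonneg fun k _ => by positivity
    calc S1 * S1 = (∑ k ∈ T, ‖z k‖) ^ 2 := by rw [hS1T]; ring
      _ ≤ (T.card : ℝ) * ∑ k ∈ T, ‖z k‖ ^ 2 := hcs
      _ ≤ (s : ℝ) * S2 := by
          apply mul_le_mul hcard hsub hTsq (by positivity)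
  -- assemble
  have hreQ : S2 * ((n : ℝ) / ((n + L : ℕ) : ℝ))
        - ((L : ℝ) / ((n + L : ℕ) : ℝ)) * (S1 * S1 - S2)
      ≤ (∑ k : Fin (n + L), ∑ k' : Fin (n + L), f k k').re := by
    rw [hsplit, Complex.add_re]
    have h5 : -(((L : ℝ) / ((n + L : ℕ) : ℝ)) * (S1 * S1 - S2))
        ≤ (∑ k, ∑ k' ∈ Finset.univ.erase k, f k k').re := by
      have h6 : |(∑ k, ∑ k' ∈ Finset.univ.erase k, f k k').re|
          ≤ ‖∑ k, ∑ k' ∈ Finset.univ.erase k, f k k'‖ := by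
        exact Complex.abs_re_le_norm _
      have h7 := (abs_le.mp (h6.trans hoff)).1
      linarith
    linarith [hdiag, h5]
  -- final arithmetic
  have hmono : ((L : ℝ) / ((n + L : ℕ) : ℝ)) * (S1 * S1 - S2)
      ≤ ((L : ℝ) / ((n + L : ℕ) : ℝ)) * ((s : ℝ) * S2 - S2) := by
    apply mul_le_mul_of_nonneg_left (by linarith) (by positivity)
  have hNN : ((n + L : ℕ) : ℝ) = (n : ℝ) + (L : ℝ) := by push_cast; ring
  have hNne : (n : ℝ) + (L : ℝ) ≠ 0 := by positivity
  have hkey : S2 * ((n : ℝ) / ((n + L : ℕ) : ℝ))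
        - ((L : ℝ) / ((n + L : ℕ) : ℝ)) * ((s : ℝ) * S2 - S2)
        - (1 - 2 * (L : ℝ) * s / ((n + L : ℕ) : ℝ)) * S2
      = S2 * ((L : ℝ) * s) / ((n + L : ℕ) : ℝ) := by
    rw [hNN]
    field_simp
    ring
  have hpos2 : 0 ≤ S2 * ((L : ℝ) * s) / ((n + L : ℕ) : ℝ) :=
    div_nonneg (mul_nonneg hS2nonneg (by positivity)) hNpos.le
  constructor
  · rw [hl2z, hl2Dz, hnormid]
    linarith [hreQ, hmono, hkey, hpos2]
  · rw [hl2z]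
    have ht : 2 * (L : ℝ) * s / ((n + L : ℕ) : ℝ) ≤ 1 / 2 := by
      rw [div_le_iff₀ hNpos]
      linarith
    nlinarith [hS2nonneg, ht]
end

section
/- Let D be the harmonic frame with N = n+L and Ls ≤ N/4. Then the localization factor satisfies η_{s,D} ≤ 1 + L√2. -/
open Finset Matrix

noncomputable def l1norm {ι : Type*} [Fintype ι] (v : ι → ℂ) : ℝ :=
  ∑ i, ‖v i‖

noncomputable def eN (N : ℕ) (m : ℤ) : ℂ :=
  Complex.exp (2 * Real.pi * Complex.I * m / N)

lemma eN_zero (N : ℕ) : eN N 0 = 1 := by simp [eN]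

lemma eN_norm (N : ℕ) (m : ℤ) : ‖eN N m‖ = 1 := by
  have h : 2 * (Real.pi:ℂ) * Complex.I * m / N = ((2 * Real.pi * m / N : ℝ) : ℂ) * Complex.I := by
    push_cast; ring
  rw [eN, h, Complex.norm_exp_ofReal_mul_I]

lemma eN_pow_N (N : ℕ) (hN : 0 < N) (m : ℤ) : (eN N m) ^ N = 1 := by
  have hN' : (N:ℂ) ≠ 0 := by exact_mod_cast hN.ne'
  rw [eN, ← Complex.exp_nat_mul]
  have h : (N:ℂ) * (2 * Real.pi * Complex.I * m / N) = (m:ℂ) * (2 * Real.pi * Complex.I) := by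
    field_simp
  rw [h, Complex.exp_int_mul, Complex.exp_two_pi_mul_I, _root_.one_zpow]

lemma eN_ne_one (N : ℕ) (hN : 0 < N) (m : ℤ) (hm : m ≠ 0) (hlt : m.natAbs < N) :
    eN N m ≠ 1 := by
  unfold eN
  intro hone
  rw [Complex.exp_eq_one_iff] at hone
  obtain ⟨t, ht⟩ := hone
  have hN' : (N:ℂ) ≠ 0 := by exact_mod_cast hN.ne'
  have h2 : (2 * (Real.pi:ℂ) * Complex.I) ≠ 0 := by
    simp [Real.pi_ne_zero, Complex.I_ne_zero]
  have hmc : (m:ℂ) = (t:ℂ) * N := by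
    apply mul_left_cancel₀ h2
    field_simp at ht
    linear_combination (2 * (Real.pi:ℂ) * Complex.I) * ht
  have hmi : m = t * N := by exact_mod_cast hmc
  have h3 : m.natAbs = t.natAbs * N := by
    rw [hmi, Int.natAbs_mul]; simp
  have h4 : 0 < t.natAbs := by
    rcases Nat.eq_zero_or_pos t.natAbs with h | h
    · exfalso; apply hm; rw [hmi, Int.natAbs_eq_zero.mp h]; ring
    · exact h
  have := Nat.le_mul_of_pos_left N h4
  omega

lemma sum_eN_full (N : ℕ) (hN : 0 < N) (m : ℤ) (hm : m ≠ 0) (hlt : m.natAbs < N) :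
    ∑ j ∈ Finset.range N, (eN N m) ^ j = 0 := by
  rw [geom_sum_eq (eN_ne_one N hN m hm hlt), eN_pow_N N hN m, sub_self, zero_div]

lemma sum_eN_partial (n L : ℕ) (m : ℤ) (hm : m ≠ 0) (hlt : m.natAbs < n + L) :
    ‖∑ j ∈ Finset.range n, (eN (n + L) m) ^ j‖ ≤ L := by
  have hN : 0 < n + L := by have := Int.natAbs_pos.mpr hm; omega
  have hfull := sum_eN_full (n + L) hN m hm hlt
  have hsplit : ∑ j ∈ Finset.range n, (eN (n+L) m) ^ j
      + ∑ j ∈ Finset.Ico n (n+L), (eN (n+L) m) ^ j = 0 := by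
    rw [← hfull, Finset.range_eq_Ico, Finset.range_eq_Ico]
    exact Finset.sum_Ico_consecutive (fun j => (eN (n+L) m) ^ j) (Nat.zero_le n) (Nat.le_add_right n L)
  have hneg : ∑ j ∈ Finset.range n, (eN (n+L) m) ^ j
      = - ∑ j ∈ Finset.Ico n (n+L), (eN (n+L) m) ^ j := by
    linear_combination hsplit
  rw [hneg, norm_neg]
  calc ‖∑ j ∈ Finset.Ico n (n+L), (eN (n+L) m) ^ j‖
      ≤ ∑ j ∈ Finset.Ico n (n+L), ‖(eN (n+L) m) ^ j‖ := norm_sum_le _ _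
    _ = ∑ j ∈ Finset.Ico n (n+L), 1 := by
        apply Finset.sum_congr rfl; intro j _; rw [norm_pow, eN_norm, one_pow]
    _ = L := by simp [Nat.card_Ico]

lemma eN_conj (N : ℕ) (m : ℤ) : (starRingEnd ℂ) (eN N m) = eN N (-m) := by
  unfold eN
  rw [← Complex.exp_conj]
  congr 1
  simp [map_div₀, Complex.conj_I, map_ofNat]

lemma eN_add (N : ℕ) (a b : ℤ) : eN N a * eN N b = eN N (a + b) := by
  unfold eN
  rw [← Complex.exp_add]
  congr 1
  push_cast
  ring

lemma eN_pow (N : ℕ) (m : ℤ) (j : ℕ) : (eN N m) ^ j = eN N (j * m) := by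
  unfold eN
  rw [← Complex.exp_nat_mul]
  congr 1
  push_cast
  ring

lemma harmonicFrame_eq (n L : ℕ) (j : Fin n) (k : Fin (n + L)) :
    harmonicFrame n L j k
      = ((1 / Real.sqrt ((n:ℝ) + L) : ℝ) : ℂ) * eN (n + L) ((j : ℤ) * (k : ℤ)) := by
  unfold harmonicFrame eN
  rw [show ((2:ℂ) * Real.pi * Complex.I * ((j:ℕ):ℂ) * ((k:ℕ):ℂ) / ((n + L : ℕ):ℂ))
      = 2 * Real.pi * Complex.I * ((((j:ℤ) * (k:ℤ)):ℤ):ℂ) / ((n + L : ℕ):ℂ) from by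
    push_cast; ring]
  norm_cast

lemma harmonic_entry_mul (n L : ℕ) (j : Fin n) (k l : Fin (n + L)) :
    star (harmonicFrame n L j k) * harmonicFrame n L j l
      = ((1 / ((n + L : ℕ) : ℝ) : ℝ) : ℂ) * (eN (n + L) ((l : ℤ) - (k : ℤ))) ^ (j : ℕ) := by
  have hx : (0:ℝ) ≤ (n:ℝ) + L := by positivity
  rw [harmonicFrame_eq, harmonicFrame_eq, Complex.star_def, _root_.map_mul, Complex.conj_ofReal,
    eN_conj, eN_pow]
  rw [show ((1 / Real.sqrt ((n:ℝ) + L) : ℝ) : ℂ) * eN (n+L) (-((j:ℤ) * (k:ℤ)))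
        * (((1 / Real.sqrt ((n:ℝ) + L) : ℝ) : ℂ) * eN (n+L) ((j:ℤ) * (l:ℤ)))
      = (((1 / Real.sqrt ((n:ℝ) + L) : ℝ) : ℂ) * ((1 / Real.sqrt ((n:ℝ) + L) : ℝ) : ℂ))
        * (eN (n+L) (-((j:ℤ) * (k:ℤ))) * eN (n+L) ((j:ℤ) * (l:ℤ))) from by ring]
  rw [eN_add, ← Complex.ofReal_mul, one_div_mul_one_div, Real.mul_self_sqrt hx]
  rw [show -((j:ℤ) * (k:ℤ)) + (j:ℤ) * (l:ℤ) = (j:ℤ) * ((l:ℤ) - (k:ℤ)) from by ring]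
  congr 2
  push_cast
  ring

lemma harmonic_entry_mul' (n L : ℕ) (j j' : Fin n) (k : Fin (n + L)) :
    harmonicFrame n L j k * star (harmonicFrame n L j' k)
      = ((1 / ((n + L : ℕ) : ℝ) : ℝ) : ℂ) * (eN (n + L) ((j : ℤ) - (j' : ℤ))) ^ (k : ℕ) := by
  have hx : (0:ℝ) ≤ (n:ℝ) + L := by positivity
  rw [harmonicFrame_eq, harmonicFrame_eq, Complex.star_def, _root_.map_mul, Complex.conj_ofReal,
    eN_conj, eN_pow]
  rw [show ((1 / Real.sqrt ((n:ℝ) + L) : ℝ) : ℂ) * eN (n+L) ((j:ℤ) * (k:ℤ))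
        * (((1 / Real.sqrt ((n:ℝ) + L) : ℝ) : ℂ) * eN (n+L) (-((j':ℤ) * (k:ℤ))))
      = (((1 / Real.sqrt ((n:ℝ) + L) : ℝ) : ℂ) * ((1 / Real.sqrt ((n:ℝ) + L) : ℝ) : ℂ))
        * (eN (n+L) ((j:ℤ) * (k:ℤ)) * eN (n+L) (-((j':ℤ) * (k:ℤ)))) from by ring]
  rw [eN_add, ← Complex.ofReal_mul, one_div_mul_one_div, Real.mul_self_sqrt hx]
  rw [show (j:ℤ) * (k:ℤ) + -((j':ℤ) * (k:ℤ)) = (k:ℤ) * ((j:ℤ) - (j':ℤ)) from by ring]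
  congr 2
  push_cast
  ring

lemma gram_apply (n L : ℕ) (k l : Fin (n + L)) :
    ((harmonicFrame n L).conjTranspose * harmonicFrame n L) k l
      = ((1 / ((n + L : ℕ) : ℝ) : ℝ) : ℂ)
        * ∑ j ∈ Finset.range n, (eN (n + L) ((l : ℤ) - (k : ℤ))) ^ j := by
  rw [Matrix.mul_apply]
  simp only [Matrix.conjTranspose_apply, harmonic_entry_mul]
  rw [← Finset.mul_sum,
    Fin.sum_univ_eq_sum_range (fun j => (eN (n + L) ((l : ℤ) - (k : ℤ))) ^ j) n]

lemma gram_diag (n L : ℕ) (k : Fin (n + L)) :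
    ((harmonicFrame n L).conjTranspose * harmonicFrame n L) k k
      = (((n : ℝ) / ((n + L : ℕ) : ℝ) : ℝ) : ℂ) := by
  rw [gram_apply]
  rw [show ((k:ℤ) - (k:ℤ)) = 0 from by ring]
  simp [eN_zero]
  ring

lemma gram_off (n L : ℕ) (hn : 0 < n) (k l : Fin (n + L)) (hkl : k ≠ l) :
    ‖((harmonicFrame n L).conjTranspose * harmonicFrame n L) k l‖
      ≤ (L : ℝ) / ((n + L : ℕ) : ℝ) := by
  have hN : (0:ℝ) < ((n + L : ℕ) : ℝ) := by positivity
  rw [gram_apply, norm_mul, Complex.norm_real]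
  have hm : ((l : ℤ) - (k : ℤ)) ≠ 0 := by
    intro h
    exact hkl (Fin.ext (by omega)).symm
  have hlt : ((l : ℤ) - (k : ℤ)).natAbs < n + L := by
    have hk := k.isLt
    have hl := l.isLt
    omega
  have hb := sum_eN_partial n L _ hm hlt
  have : |1 / ((n + L : ℕ) : ℝ)| = 1 / ((n + L : ℕ) : ℝ) := abs_of_pos (by positivity)
  rw [Real.norm_eq_abs, this]
  rw [div_eq_mul_one_div ((L:ℝ)) ((n + L : ℕ) : ℝ), mul_comm ((L:ℝ)) _]
  exact mul_le_mul_of_nonneg_left hb (by positivity)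

lemma harmonic_DDh (n L : ℕ) (hn : 0 < n) :
    harmonicFrame n L * (harmonicFrame n L).conjTranspose = 1 := by
  have hN : 0 < n + L := by omega
  ext j j'
  rw [Matrix.mul_apply]
  simp only [Matrix.conjTranspose_apply, harmonic_entry_mul']
  rw [← Finset.mul_sum,
    Fin.sum_univ_eq_sum_range (fun k => (eN (n + L) ((j : ℤ) - (j' : ℤ))) ^ k) (n + L)]
  by_cases h : j = j'
  · subst h
    rw [show ((j:ℤ) - (j:ℤ)) = 0 from by ring]
    simp [eN_zero, Matrix.one_apply_eq]
    rw [inv_mul_cancel₀ (show ((n:ℂ) + L) ≠ 0 from by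
      exact_mod_cast Nat.cast_ne_zero.mpr (by omega : n + L ≠ 0))]
  · have hm : ((j : ℤ) - (j' : ℤ)) ≠ 0 := by
      intro hc
      exact h (Fin.ext (by omega))
    have hlt : ((j : ℤ) - (j' : ℤ)).natAbs < n + L := by
      have h1 := j.isLt
      have h2 := j'.isLt
      omega
    rw [sum_eN_full (n + L) hN _ hm hlt, mul_zero, Matrix.one_apply_ne h]

lemma dot_star_self_re {ι : Type*} [Fintype ι] (v : ι → ℂ) :
    (dotProduct (star v) v).re = ∑ i, ‖v i‖ ^ 2 := by
  rw [dotProduct, Complex.re_sum]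
  apply Finset.sum_congr rfl
  intro i _
  rw [Pi.star_apply, Complex.star_def, mul_comm, Complex.mul_conj']
  norm_cast

lemma star_mul_real_mul_re (c : ℝ) (a : ℂ) : (star a * (((c:ℝ):ℂ) * a)).re = c * ‖a‖ ^ 2 := by
  rw [show star a * (((c:ℝ):ℂ) * a) = ((c:ℝ):ℂ) * (a * star a) from by ring, Complex.star_def,
    Complex.mul_conj']
  norm_cast

lemma cs_sum {ι : Type*} (T : Finset ι) (f : ι → ℝ) (hf : ∀ i, 0 ≤ f i) :
    ∑ i ∈ T, f i ≤ Real.sqrt T.card * Real.sqrt (∑ i ∈ T, f i ^ 2) := by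
  have h := Finset.sum_mul_sq_le_sq_mul_sq T f (fun _ => 1)
  simp only [mul_one, one_pow, Finset.sum_const, nsmul_eq_mul] at h
  have h0 : 0 ≤ ∑ i ∈ T, f i := Finset.sum_nonneg fun i _ => hf i
  calc ∑ i ∈ T, f i = Real.sqrt ((∑ i ∈ T, f i) ^ 2) := (Real.sqrt_sq h0).symm
    _ ≤ Real.sqrt ((T.card : ℝ) * ∑ i ∈ T, f i ^ 2) := Real.sqrt_le_sqrt (by nlinarith)
    _ = _ := Real.sqrt_mul (by positivity) _

lemma arith_final (nR LR sR NR Y Z2 : ℝ) (hcast : NR = nR + LR) (hNR : 0 < NR)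
    (hLs : LR * sR ≤ NR / 4) (hZ2nn : 0 ≤ Z2)
    (hmul : nR * Z2 ≤ NR + LR * Y) (hLZ : LR * Y ≤ LR * (sR * Z2))
    (hfac : 0 ≤ nR - LR * sR - NR / 2) : Z2 ≤ 2 := by
  nlinarith [mul_nonneg hfac hZ2nn]

set_option maxHeartbeats 2000000 in
/-- For the harmonic frame with `N = n+L` and `Ls ≤ N/4`, the localization factor
`η_{s,D} = sup{‖DᴴDz‖₁/√s : ‖z‖₀ ≤ s, ‖Dz‖₂ = 1}` is at most `1 + L√2`. -/
theorem harmonicFrame_localization_factor (n L s : ℕ) (hn : 0 < n) (hs : 1 ≤ s)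
    (hLs : ((L : ℝ) * s) ≤ ((n + L : ℕ) : ℝ) / 4) :
    sSup {t : ℝ | ∃ z : Fin (n + L) → ℂ, sparsity z ≤ s ∧
        l2norm ((harmonicFrame n L).mulVec z) = 1 ∧
        t = l1norm ((((harmonicFrame n L).conjTranspose * harmonicFrame n L)).mulVec z)
              / Real.sqrt s}
      ≤ 1 + (L : ℝ) * Real.sqrt 2 := by
  classical
  have hN : 0 < n + L := by omega
  have hNR : (0:ℝ) < ((n + L : ℕ) : ℝ) := by exact_mod_cast hN
  have hNne : ((n + L : ℕ) : ℝ) ≠ 0 := ne_of_gt hNR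
  have hsR : (1:ℝ) ≤ (s:ℝ) := by exact_mod_cast hs
  have hsqs : (0:ℝ) < Real.sqrt s := Real.sqrt_pos.mpr (by positivity)
  apply Real.sSup_le
  · rintro t ⟨z, hsp, hl2, rfl⟩
    set D := harmonicFrame n L with hD
    set G := D.conjTranspose * D with hG
    set w := G.mulVec z with hw
    set S : Finset (Fin (n + L)) := Finset.univ.filter (fun i => z i ≠ 0) with hS
    have hScard : S.card ≤ s := by
      simpa [sparsity, hS, Finset.filter_congr_decidable] using hsp
    have hzS : ∀ i, i ∉ S → z i = 0 := by
      intro i hi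
      by_contra hzi
      exact hi (Finset.mem_filter.mpr ⟨Finset.mem_univ i, hzi⟩)
    set Z1 := ∑ i, ‖z i‖ with hZ1
    set Z2 := ∑ i, ‖z i‖ ^ 2 with hZ2
    have hZ1nn : 0 ≤ Z1 := Finset.sum_nonneg (fun i _ => norm_nonneg _)
    have hZ2nn : 0 ≤ Z2 := Finset.sum_nonneg (fun i _ => by positivity)
    have hu : ∑ j, ‖(D.mulVec z) j‖ ^ 2 = 1 := by
      unfold l2norm at hl2
      exact Real.sqrt_eq_one.mp hl2
    have hwk : ∀ k, w k = ∑ l, G k l * z l := fun k => rfl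
    -- Gram facts
    have hGd : ∀ k, G k k = (((n : ℝ) / ((n + L : ℕ) : ℝ) : ℝ) : ℂ) := by
      intro k; rw [hG, hD]; exact gram_diag n L k
    have hGo : ∀ k l, k ≠ l → ‖G k l‖ ≤ (L : ℝ) / ((n + L : ℕ) : ℝ) := by
      intro k l hkl; rw [hG, hD]; exact gram_off n L hn k l hkl
    -- ⟨z, Gz⟩ = ‖Dz‖²
    have hdot : dotProduct (star (D.mulVec z)) (D.mulVec z)
        = dotProduct (star z) w := by
      rw [Matrix.star_mulVec, ← Matrix.dotProduct_mulVec, Matrix.mulVec_mulVec]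
    have h1 : (dotProduct (star z) w).re = 1 := by
      rw [← hdot, dot_star_self_re, hu]
    -- ‖w‖² = 1
    have hwnorm : ∑ k, ‖w k‖ ^ 2 = 1 := by
      have e1 : dotProduct (star w) w
          = dotProduct (star (D.mulVec z)) (D.mulVec z) := by
        have hw' : w = D.conjTranspose.mulVec (D.mulVec z) := by
          rw [hw, Matrix.mulVec_mulVec]
        rw [hw', Matrix.star_mulVec, Matrix.conjTranspose_conjTranspose,
          ← Matrix.dotProduct_mulVec, Matrix.mulVec_mulVec, hD,
          harmonic_DDh n L hn, Matrix.one_mulVec]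
      rw [← dot_star_self_re, e1, dot_star_self_re, hu]
    -- ℓ¹-ℓ² bound on z
    have hZ1S : Z1 = ∑ i ∈ S, ‖z i‖ := by
      rw [hZ1]
      exact (Finset.sum_subset (Finset.subset_univ S)
        (fun i _ hi => by rw [hzS i hi, norm_zero])).symm
    have hZ1le : Z1 ≤ Real.sqrt s * Real.sqrt Z2 := by
      rw [hZ1S]
      calc ∑ i ∈ S, ‖z i‖
          ≤ Real.sqrt S.card * Real.sqrt (∑ i ∈ S, ‖z i‖ ^ 2) :=
            cs_sum S _ (fun i => norm_nonneg _)
        _ ≤ Real.sqrt s * Real.sqrt Z2 := by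
            apply mul_le_mul
            · exact Real.sqrt_le_sqrt (by exact_mod_cast hScard)
            · apply Real.sqrt_le_sqrt
              rw [hZ2]
              exact Finset.sum_le_sum_of_subset_of_nonneg (Finset.subset_univ S)
                (fun i _ _ => by positivity)
            · exact Real.sqrt_nonneg _
            · exact Real.sqrt_nonneg _
    have hZ1sq : Z1 ^ 2 ≤ (s : ℝ) * Z2 := by
      have h1' := Real.sq_sqrt (show (0:ℝ) ≤ (s:ℝ) by positivity)
      have h2' := Real.sq_sqrt hZ2nn
      nlinarith [Real.sqrt_nonneg (s:ℝ), Real.sqrt_nonneg Z2, hZ1le]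
    -- energy split: Z2 ≤ 2
    set A := ∑ k, star (z k) * (G k k * z k) with hA
    set B := ∑ k, ∑ l ∈ Finset.univ.erase k, star (z k) * (G k l * z l) with hB
    have hsplit : dotProduct (star z) w = A + B := by
      rw [dotProduct, hA, hB, ← Finset.sum_add_distrib]
      apply Finset.sum_congr rfl
      intro k _
      rw [hwk k, Finset.mul_sum]
      simp only [Pi.star_apply]
      rw [← Finset.add_sum_erase Finset.univ (fun l => star (z k) * (G k l * z l))
          (Finset.mem_univ k)]
    have hdiag : A.re = ((n : ℝ) / ((n + L : ℕ) : ℝ)) * Z2 := by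
      rw [hA, Complex.re_sum, hZ2, Finset.mul_sum]
      apply Finset.sum_congr rfl
      intro k _
      rw [hGd k, star_mul_real_mul_re]
    have hoffB : ‖B‖ ≤ ((L : ℝ) / ((n + L : ℕ) : ℝ)) * (Z1 * Z1) := by
      rw [hB]
      calc ‖∑ k, ∑ l ∈ Finset.univ.erase k, star (z k) * (G k l * z l)‖
          ≤ ∑ k, ‖∑ l ∈ Finset.univ.erase k, star (z k) * (G k l * z l)‖ := norm_sum_le _ _
        _ ≤ ∑ k, ∑ l ∈ Finset.univ.erase k, ‖star (z k) * (G k l * z l)‖ :=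
            Finset.sum_le_sum (fun k _ => norm_sum_le _ _)
        _ ≤ ∑ k, ∑ l ∈ Finset.univ.erase k,
              ‖z k‖ * (((L : ℝ) / ((n + L : ℕ) : ℝ)) * ‖z l‖) := by
            apply Finset.sum_le_sum; intro k _
            apply Finset.sum_le_sum; intro l hl
            have hkl : k ≠ l := fun h => (Finset.mem_erase.mp hl).1 h.symm
            rw [norm_mul, norm_mul, norm_star]
            apply mul_le_mul_of_nonneg_left _ (norm_nonneg _)
            exact mul_le_mul_of_nonneg_right (hGo k l hkl) (norm_nonneg _)
        _ ≤ ∑ k, ∑ l, ‖z k‖ * (((L : ℝ) / ((n + L : ℕ) : ℝ)) * ‖z l‖) :=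
            Finset.sum_le_sum (fun k _ => Finset.sum_le_sum_of_subset_of_nonneg
              (Finset.erase_subset _ _) (fun i _ _ => by positivity))
        _ = ((L : ℝ) / ((n + L : ℕ) : ℝ)) * (Z1 * Z1) := by
            rw [show (∑ k, ∑ l, ‖z k‖ * (((L : ℝ) / ((n + L : ℕ) : ℝ)) * ‖z l‖))
                = ∑ k, ‖z k‖ * (((L : ℝ) / ((n + L : ℕ) : ℝ)) * Z1) from
              Finset.sum_congr rfl (fun k _ => by
                rw [← Finset.mul_sum, ← Finset.mul_sum, ← hZ1])]
            rw [← Finset.sum_mul, ← hZ1]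
            ring
    have hAre : A.re ≤ 1 + ((L : ℝ) / ((n + L : ℕ) : ℝ)) * (Z1 * Z1) := by
      have h1' := h1
      rw [hsplit, Complex.add_re] at h1'
      have hb : |B.re| ≤ ‖B‖ := by
        exact Complex.abs_re_le_norm B
      have hb' := abs_le.mp hb
      linarith [hoffB, hb'.1]
    have hZ2le2 : Z2 ≤ 2 := by
      have hkey : ((n : ℝ) / ((n + L : ℕ) : ℝ)) * Z2
          ≤ 1 + ((L : ℝ) / ((n + L : ℕ) : ℝ)) * (Z1 * Z1) := by
        rw [← hdiag]; exact hAre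
      have hcast : ((n + L : ℕ) : ℝ) = (n : ℝ) + L := by push_cast; ring
      have hLnn : (0:ℝ) ≤ (L : ℝ) := by positivity
      have hLle : (L : ℝ) ≤ (L : ℝ) * s := le_mul_of_one_le_right hLnn hsR
      have hZ1Z1 : Z1 * Z1 ≤ (s : ℝ) * Z2 := by rw [← pow_two]; exact hZ1sq
      have e1 : ((n : ℝ) / ((n + L : ℕ) : ℝ)) * Z2 * ((n + L : ℕ) : ℝ) = (n : ℝ) * Z2 := by
        field_simp
      have e2 : (1 + ((L : ℝ) / ((n + L : ℕ) : ℝ)) * (Z1 * Z1)) * ((n + L : ℕ) : ℝ)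
          = ((n + L : ℕ) : ℝ) + (L : ℝ) * (Z1 * Z1) := by
        field_simp
      have hmul := mul_le_mul_of_nonneg_right hkey (le_of_lt hNR)
      rw [e1, e2] at hmul
      have hLZ : (L : ℝ) * (Z1 * Z1) ≤ (L : ℝ) * ((s : ℝ) * Z2) :=
        mul_le_mul_of_nonneg_left hZ1Z1 hLnn
      have hfac : (0:ℝ) ≤ (n : ℝ) - (L : ℝ) * s - ((n + L : ℕ) : ℝ) / 2 := by
        rw [hcast] at hLs ⊢
        linarith
      exact arith_final (n:ℝ) (L:ℝ) (s:ℝ) ((n+L:ℕ):ℝ) (Z1*Z1) Z2 hcast hNR hLs hZ2nn hmul hLZ hfac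
    have hsqZ2 : Real.sqrt Z2 ≤ Real.sqrt 2 := Real.sqrt_le_sqrt hZ2le2
    have hZ1fin : Z1 ≤ Real.sqrt s * Real.sqrt 2 :=
      le_trans hZ1le (mul_le_mul_of_nonneg_left hsqZ2 (Real.sqrt_nonneg _))
    have honS : ∑ k ∈ S, ‖w k‖ ≤ Real.sqrt s := by
      calc ∑ k ∈ S, ‖w k‖
          ≤ Real.sqrt S.card * Real.sqrt (∑ k ∈ S, ‖w k‖ ^ 2) :=
            cs_sum S _ (fun k => norm_nonneg _)
        _ ≤ Real.sqrt s * Real.sqrt 1 := by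
            apply mul_le_mul
            · exact Real.sqrt_le_sqrt (by exact_mod_cast hScard)
            · apply Real.sqrt_le_sqrt
              rw [← hwnorm]
              exact Finset.sum_le_sum_of_subset_of_nonneg (Finset.subset_univ S)
                (fun i _ _ => by positivity)
            · exact Real.sqrt_nonneg _
            · exact Real.sqrt_nonneg _
        _ = Real.sqrt s := by rw [Real.sqrt_one, mul_one]
    set Sc := Finset.univ.filter (fun i => ¬ z i ≠ 0) with hSc
    have hwb : ∀ k ∈ Sc, ‖w k‖ ≤ ((L : ℝ) / ((n + L : ℕ) : ℝ)) * Z1 := by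
      intro k hk
      have hzk : z k = 0 := not_not.mp (Finset.mem_filter.mp hk).2
      have hwkS : w k = ∑ l ∈ S, G k l * z l := by
        rw [hwk k]
        exact (Finset.sum_subset (Finset.subset_univ S)
          (fun l _ hl => by rw [hzS l hl, mul_zero])).symm
      rw [hwkS]
      calc ‖∑ l ∈ S, G k l * z l‖ ≤ ∑ l ∈ S, ‖G k l * z l‖ := norm_sum_le _ _
        _ ≤ ∑ l ∈ S, ((L : ℝ) / ((n + L : ℕ) : ℝ)) * ‖z l‖ := by
            apply Finset.sum_le_sum
            intro l hl
            have hlne : k ≠ l := fun h => (Finset.mem_filter.mp hl).2 (h ▸ hzk)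
            rw [norm_mul]
            exact mul_le_mul_of_nonneg_right (hGo k l hlne) (norm_nonneg _)
        _ = ((L : ℝ) / ((n + L : ℕ) : ℝ)) * Z1 := by rw [← Finset.mul_sum, ← hZ1S]
    have hoffSum : ∑ k ∈ Sc, ‖w k‖ ≤ (L : ℝ) * Z1 := by
      calc ∑ k ∈ Sc, ‖w k‖
          ≤ ∑ _k ∈ Sc, ((L : ℝ) / ((n + L : ℕ) : ℝ)) * Z1 := Finset.sum_le_sum hwb
        _ = Sc.card * (((L : ℝ) / ((n + L : ℕ) : ℝ)) * Z1) := by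
            rw [Finset.sum_const, nsmul_eq_mul]
        _ ≤ ((n + L : ℕ) : ℝ) * (((L : ℝ) / ((n + L : ℕ) : ℝ)) * Z1) := by
            apply mul_le_mul_of_nonneg_right _
              (mul_nonneg (div_nonneg (Nat.cast_nonneg L) (le_of_lt hNR)) hZ1nn)
            have hc : Sc.card ≤ n + L := by
              simpa using Finset.card_le_univ Sc
            exact_mod_cast hc
        _ = (L : ℝ) * Z1 := by
            rw [show ((n + L : ℕ) : ℝ) * (((L : ℝ) / ((n + L : ℕ) : ℝ)) * Z1)
                = ((n + L : ℕ) : ℝ) / ((n + L : ℕ) : ℝ) * ((L : ℝ) * Z1) from by ring,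
              div_self hNne, one_mul]
    have hsum : l1norm w ≤ Real.sqrt s + (L : ℝ) * Z1 := by
      unfold l1norm
      rw [← Finset.sum_filter_add_sum_filter_not Finset.univ (fun i => z i ≠ 0)
        (fun k => ‖w k‖)]
      exact add_le_add honS hoffSum
    rw [div_le_iff₀ hsqs]
    calc l1norm w ≤ Real.sqrt s + (L : ℝ) * Z1 := hsum
      _ ≤ Real.sqrt s + (L : ℝ) * (Real.sqrt s * Real.sqrt 2) :=
          add_le_add_right (mul_le_mul_of_nonneg_left hZ1fin (Nat.cast_nonneg L)) _
      _ = (1 + (L : ℝ) * Real.sqrt 2) * Real.sqrt s := by ring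
  · positivity
end

section
/- For every a > 0, ∫₀^a √(log(1 + 1/t)) dt ≤ a·√(log(e(1 + 1/a))). -/
open MeasureTheory Set Real

private lemma sqrtlog_hasDerivAt {x : ℝ} (hx : 0 < x) :
    HasDerivAt (fun t : ℝ => t * Real.log (1 + 1 / t) + Real.log (1 + t))
      (Real.log (1 + 1 / x)) x := by
  have h1 : (0 : ℝ) < 1 + 1 / x := by positivity
  have h2 : (0 : ℝ) < 1 + x := by linarith
  have h_inv : HasDerivAt (fun t : ℝ => 1 + 1 / t) (-(x ^ 2)⁻¹) x := by
    simpa [one_div] using (hasDerivAt_inv hx.ne').const_add 1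
  have h_log : HasDerivAt (fun t : ℝ => Real.log (1 + 1 / t))
      (-(x ^ 2)⁻¹ / (1 + 1 / x)) x := h_inv.log h1.ne'
  have h_mul : HasDerivAt (fun t : ℝ => t * Real.log (1 + 1 / t))
      (1 * Real.log (1 + 1 / x) + x * (-(x ^ 2)⁻¹ / (1 + 1 / x))) x :=
    (hasDerivAt_id x).mul h_log
  have h_log2 : HasDerivAt (fun t : ℝ => Real.log (1 + t)) (1 / (1 + x)) x := by
    have := ((hasDerivAt_id x).const_add 1).log h2.ne'
    simpa using this
  have := h_mul.add h_log2
  refine this.congr_deriv ?_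
  have hx0 := hx.ne'
  field_simp
  ring

private lemma sqrtlog_cont {a : ℝ} (ha : 0 < a) :
    ContinuousOn (fun t : ℝ => t * Real.log (1 + 1 / t) + Real.log (1 + t)) (Icc 0 a) := by
  have hG : ContinuousOn
      (fun t : ℝ => t * Real.log (1 + t) - t * Real.log t + Real.log (1 + t)) (Icc 0 a) := by
    have hlog : ContinuousOn (fun t : ℝ => Real.log (1 + t)) (Icc 0 a) :=
      (continuousOn_const.add continuousOn_id).log fun x hx =>
        (by have := hx.1; simp only [id_eq]; linarith : (0:ℝ) < 1 + id x).ne'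
    exact ((continuousOn_id.mul hlog).sub
      Real.continuous_mul_log.continuousOn).add hlog
  refine hG.congr fun x hx => ?_
  rcases eq_or_lt_of_le hx.1 with h0 | h0
  · simp [← h0]
  · have : (1 : ℝ) + 1 / x = (1 + x) / x := by field_simp; ring
    rw [this, Real.log_div (by positivity) h0.ne']
    ring

/-- For every `a > 0`, `∫₀^a √(log(1 + 1/t)) dt ≤ a √(log(e(1 + 1/a)))`. -/
theorem integral_sqrt_log_le (a : ℝ) (ha : 0 < a) :
    ∫ t in (0 : ℝ)..a, Real.sqrt (Real.log (1 + 1 / t))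
      ≤ a * Real.sqrt (Real.log (Real.exp 1 * (1 + 1 / a))) := by
  set L : ℝ → ℝ := fun t => Real.log (1 + 1 / t) with hLdef
  set F : ℝ → ℝ := fun t => t * Real.log (1 + 1 / t) + Real.log (1 + t) with hFdef
  have hderiv : ∀ x ∈ Ioo (0 : ℝ) a, HasDerivAt F (L x) x := fun x hx =>
    sqrtlog_hasDerivAt hx.1
  have hcont : ContinuousOn F (Icc 0 a) := sqrtlog_cont ha
  have hLnonneg : ∀ x : ℝ, 0 < x → 0 ≤ L x := fun x hx =>
    Real.log_nonneg (le_add_of_nonneg_right (one_div_nonneg.2 hx.le))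
  have hint : IntegrableOn L (Ioc 0 a) :=
    intervalIntegral.integrableOn_deriv_of_nonneg hcont hderiv fun x hx => hLnonneg x hx.1
  have hIi : IntervalIntegrable L volume 0 a :=
    (intervalIntegrable_iff_integrableOn_Ioc_of_le ha.le).2 hint
  have hI : ∫ t in (0:ℝ)..a, L t = a * Real.log (1 + 1 / a) + Real.log (1 + a) := by
    rw [intervalIntegral.integral_eq_sub_of_hasDerivAt_of_le ha.le hcont hderiv hIi]
    simp [hFdef]
  -- measurability
  have hLmeas : Measurable L :=
    Real.measurable_log.comp (measurable_const.add (measurable_const.div measurable_id))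
  have hgi : IntegrableOn (Real.sqrt ∘ L) (Ioc 0 a) := by
    have hbound : ∀ᵐ x ∂(volume.restrict (Ioc 0 a)),
        ‖(Real.sqrt ∘ L) x‖ ≤ 1 + L x := by
      rw [ae_restrict_iff' measurableSet_Ioc]
      refine ae_of_all _ fun x hx => ?_
      have h0 := hLnonneg x hx.1
      rw [Function.comp_apply, Real.norm_eq_abs, abs_of_nonneg (Real.sqrt_nonneg _)]
      have : Real.sqrt (L x) ≤ Real.sqrt ((1 + L x) ^ 2) :=
        Real.sqrt_le_sqrt (by nlinarith)
      rwa [Real.sqrt_sq (by linarith)] at this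
    have hintc : Integrable (fun x => 1 + L x) (volume.restrict (Ioc 0 a)) :=
      (integrable_const 1).add hint
    exact hintc.mono
      ((Real.continuous_sqrt.measurable.comp hLmeas).aestronglyMeasurable)
      (by simpa using hbound.mono fun x hx => hx.trans (le_abs_self _))
  -- Jensen's inequality
  have hμ0 : volume (Ioc (0:ℝ) a) ≠ 0 := by
    simp [Real.volume_Ioc, ha, ENNReal.ofReal_pos.2 ha]
  have hμt : volume (Ioc (0:ℝ) a) ≠ ⊤ := by simp [Real.volume_Ioc]
  have hfs : ∀ᵐ x ∂(volume.restrict (Ioc 0 a)), L x ∈ Ici (0:ℝ) := by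
    rw [ae_restrict_iff' measurableSet_Ioc]
    exact ae_of_all _ fun x hx => hLnonneg x hx.1
  have hconc : ConcaveOn ℝ (Ici 0) (Real.sqrt) := by
    have := Real.strictConcaveOn_sqrt.concaveOn
    simpa using this
  have hJ : (⨍ x in Ioc 0 a, Real.sqrt (L x)) ≤ Real.sqrt (⨍ x in Ioc 0 a, L x) :=
    hconc.le_map_set_average Real.continuous_sqrt.continuousOn isClosed_Ici
      hμ0 hμt hfs hint hgi
  have hvol : (volume (Ioc (0:ℝ) a)).toReal = a := by
    simp [Real.volume_Ioc, ENNReal.toReal_ofReal ha.le]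
  -- turn interval integral into set integral / average
  have hEq : ∫ t in (0:ℝ)..a, Real.sqrt (L t)
      = a * ⨍ x in Ioc 0 a, Real.sqrt (L x) := by
    rw [intervalIntegral.integral_of_le ha.le, setAverage_eq, measureReal_def, hvol, smul_eq_mul]
    field_simp
  have havgL : (⨍ x in Ioc 0 a, L x) = a⁻¹ * (a * Real.log (1 + 1 / a) + Real.log (1 + a)) := by
    rw [setAverage_eq, measureReal_def, hvol, smul_eq_mul, ← intervalIntegral.integral_of_le ha.le, hI]
  have hlogle : a⁻¹ * (a * Real.log (1 + 1 / a) + Real.log (1 + a))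
      ≤ Real.log (Real.exp 1 * (1 + 1 / a)) := by
    have h1 : (0 : ℝ) < 1 + 1 / a := by positivity
    rw [Real.log_mul (Real.exp_ne_zero 1) h1.ne', Real.log_exp]
    have hle : Real.log (1 + a) ≤ a := by
      have := Real.log_le_sub_one_of_pos (show (0:ℝ) < 1 + a by linarith)
      linarith
    rw [inv_mul_le_iff₀ ha]
    nlinarith [hle]
  calc ∫ t in (0:ℝ)..a, Real.sqrt (L t)
      = a * ⨍ x in Ioc 0 a, Real.sqrt (L x) := hEq
    _ ≤ a * Real.sqrt (⨍ x in Ioc 0 a, L x) := by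
        exact mul_le_mul_of_nonneg_left hJ ha.le
    _ ≤ a * Real.sqrt (Real.log (Real.exp 1 * (1 + 1 / a))) := by
        refine mul_le_mul_of_nonneg_left ?_ ha.le
        exact Real.sqrt_le_sqrt (by rw [havgL]; exact hlogle)
end
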